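/- Let α₁,…,αₙ (n ≥ 1) be nonzero complex linear forms on ℂ^ℓ, M = {z ∈ ℂ^ℓ : ∏ᵢ αᵢ(z) ≠ 0}, and M* the image of M in ℙ(ℂ^ℓ). Then M is homotopy equivalent to M* × S¹, where S¹ is the circle. -/

import Mathlib

open Complex ContinuousMap Projectivization Topology


/-- The quotient topology on the projectivization of a topological vector space. -/
noncomputable instance projectivizationTopology {K V : Type*} [DivisionRing K] [AddCommGroup V]
    [Module K V] [TopologicalSpace V] : TopologicalSpace (Projectivization K V) := by
  unfold Projectivization; infer_instance

namespace ArrAux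

/-- Normalization map from the punctured plane to the circle. -/
noncomputable def normalize (c : {c : ℂ // c ≠ 0}) : Circle :=
  ⟨(‖c.1‖ : ℂ)⁻¹ * c.1, mem_sphere_zero_iff_norm.2 <| by
    have h : ‖c.1‖ ≠ 0 := norm_ne_zero_iff.2 c.2
    rw [norm_mul, norm_inv, Complex.norm_real, Real.norm_of_nonneg (norm_nonneg _),
      inv_mul_cancel₀ h]⟩

lemma continuous_normalize : Continuous normalize := by
  apply Continuous.subtype_mk
  exact ((continuous_ofReal.comp (continuous_norm.comp continuous_subtype_val)).inv₀
    (fun c => by exact_mod_cast fun h => c.2 (by simpa [norm_eq_zero] using ofReal_eq_zero.mp h))).mul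
    continuous_subtype_val

/-- The punctured complex plane is homotopy equivalent to the circle. -/
noncomputable def puncturedHomotopyEquivCircle :
    ContinuousMap.HomotopyEquiv {c : ℂ // c ≠ 0} Circle where
  toFun := ⟨normalize, continuous_normalize⟩
  invFun := ⟨fun z => ⟨z.1, z.coe_ne_zero⟩, by
    exact Continuous.subtype_mk (by exact continuous_induced_dom) _⟩
  left_inv := by
    refine ⟨⟨⟨fun x => ⟨((1 - x.1.1) * ‖x.2.1‖⁻¹ + x.1.1 : ℝ) • x.2.1, ?_⟩, ?_⟩, ?_, ?_⟩⟩
    · have hpos : 0 < (1 - x.1.1) * ‖x.2.1‖⁻¹ + x.1.1 := by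
        have ht0 : (0:ℝ) ≤ x.1.1 := x.1.2.1
        have ht1 : x.1.1 ≤ 1 := x.1.2.2
        have hinv : (0:ℝ) < ‖x.2.1‖⁻¹ := inv_pos.2 (norm_pos_iff.2 x.2.2)
        rcases eq_or_lt_of_le ht0 with h | h
        · rw [← h]; simpa using hinv
        · have h2 : (0:ℝ) ≤ (1 - x.1.1) * ‖x.2.1‖⁻¹ := mul_nonneg (by linarith) hinv.le
          linarith
      exact smul_ne_zero (ne_of_gt hpos) x.2.2
    · apply Continuous.subtype_mk
      apply Continuous.fun_smul
      · apply Continuous.add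
        · apply Continuous.mul
          · exact continuous_const.sub (continuous_subtype_val.comp continuous_fst)
          · exact ((continuous_norm.comp (continuous_subtype_val.comp continuous_snd)).inv₀
              (fun x => norm_ne_zero_iff.2 x.2.2))
        · exact continuous_subtype_val.comp continuous_fst
      · exact continuous_subtype_val.comp continuous_snd
    · intro c
      apply Subtype.ext
      simp [normalize, Complex.real_smul]
    · intro c
      apply Subtype.ext
      simp
  right_inv := by
    have h : (⟨normalize, continuous_normalize⟩ : C({c : ℂ // c ≠ 0}, Circle)).comp
        ⟨fun z => ⟨z.1, z.coe_ne_zero⟩, Continuous.subtype_mk (by exact continuous_induced_dom) _⟩ =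
        ContinuousMap.id Circle := by
      ext z
      show ((normalize ⟨z.1, z.coe_ne_zero⟩ : Circle) : ℂ) = (z : ℂ)
      simp [normalize, Circle.norm_coe]
    rw [h]

variable {K V : Type*} [Field K] [AddCommGroup V] [Module K V]
    [TopologicalSpace V] [ContinuousConstSMul K V]

omit [ContinuousConstSMul K V] in
lemma isQuotientMap_projMk :
    IsQuotientMap (fun v : {v : V // v ≠ 0} => Projectivization.mk K v.1 v.2) :=
  isQuotientMap_quotient_mk' (s := projectivizationSetoid K V)

lemma isOpenMap_projMk :
    IsOpenMap (fun v : {v : V // v ≠ 0} => Projectivization.mk K v.1 v.2) := by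
  set f := fun v : {v : V // v ≠ 0} => Projectivization.mk K v.1 v.2 with hf
  intro U hU
  rw [← isQuotientMap_projMk.isOpen_preimage]
  have key : f ⁻¹' (f '' U) =
      ⋃ c : Kˣ, (fun v : {v : V // v ≠ 0} =>
        (⟨(c : K) • v.1, smul_ne_zero c.ne_zero v.2⟩ : {v : V // v ≠ 0})) ⁻¹' U := by
    ext v
    simp only [Set.mem_preimage, Set.mem_image, Set.mem_iUnion]
    constructor
    · rintro ⟨u, hu, h⟩
      obtain ⟨c, hc⟩ := (Projectivization.mk_eq_mk_iff K u.1 v.1 u.2 v.2).1 h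
      exact ⟨c, Set.mem_of_eq_of_mem (Subtype.ext hc) hu⟩
    · rintro ⟨c, hc⟩
      refine ⟨_, hc, ?_⟩
      exact (Projectivization.mk_eq_mk_iff K _ _ _ _).2 ⟨c, rfl⟩
  rw [key]
  exact isOpen_iUnion fun c =>
    (Continuous.subtype_mk ((continuous_const_smul (c : K)).comp continuous_subtype_val)
      _).isOpen_preimage U hU

end ArrAux

/-- The complement `M` of a central arrangement defined by nonzero linear
forms `α₁,…,αₙ` (`n ≥ 1`) on `ℂ^ℓ` is homotopy equivalent to `M* × S¹`, where `M*` is the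
projectivized complement and `S¹` is the unit circle in `ℂ`. -/
theorem complement_homotopy_equiv_projectivized_prod_circle {ℓ n : ℕ} (hn : 1 ≤ n)
    (α : Fin n → ((Fin ℓ → ℂ) →ₗ[ℂ] ℂ)) (hα : ∀ i, α i ≠ 0) :
    Nonempty (ContinuousMap.HomotopyEquiv {z : Fin ℓ → ℂ // (∏ i, α i z) ≠ 0}
      ({q : Projectivization ℂ (Fin ℓ → ℂ) //
          ∃ z : Fin ℓ → ℂ, ∃ hz : z ≠ 0, (∏ i, α i z) ≠ 0 ∧ Projectivization.mk ℂ z hz = q}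
        × Circle)) := by
  classical
  set i0 : Fin n := ⟨0, hn⟩ with hi0
  have hz0 : ∀ z : Fin ℓ → ℂ, (∏ i, α i z) ≠ 0 → z ≠ 0 := by
    intro z h hz
    subst hz
    exact h (Finset.prod_eq_zero (Finset.mem_univ i0) (map_zero _))
  have hcα : ∀ i, Continuous fun z : Fin ℓ → ℂ => α i z :=
    fun i => (α i).continuous_of_finiteDimensional
  have hcprod : Continuous fun z : Fin ℓ → ℂ => ∏ i, α i z :=
    continuous_finset_prod _ fun i _ => hcα i
  have hps : ∀ (c : ℂ) (z : Fin ℓ → ℂ), (∏ i, α i (c • z)) = c ^ n * ∏ i, α i z := by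
    intro c z
    simp only [map_smul, smul_eq_mul]
    rw [Finset.prod_mul_distrib, Finset.prod_const, Finset.card_univ, Fintype.card_fin]
  have hα0 : ∀ z : {z : Fin ℓ → ℂ // (∏ i, α i z) ≠ 0}, α i0 z.1 ≠ 0 := by
    intro z h
    exact z.2 (Finset.prod_eq_zero (Finset.mem_univ i0) h)
  -- the projection map
  let p : {z : Fin ℓ → ℂ // (∏ i, α i z) ≠ 0} →
      {q : Projectivization ℂ (Fin ℓ → ℂ) //
        ∃ z : Fin ℓ → ℂ, ∃ hz : z ≠ 0, (∏ i, α i z) ≠ 0 ∧ Projectivization.mk ℂ z hz = q} :=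
    fun z => ⟨Projectivization.mk ℂ z.1 (hz0 z.1 z.2), ⟨z.1, hz0 z.1 z.2, z.2, rfl⟩⟩
  have hrep : ∀ q : {q : Projectivization ℂ (Fin ℓ → ℂ) //
      ∃ z : Fin ℓ → ℂ, ∃ hz : z ≠ 0, (∏ i, α i z) ≠ 0 ∧ Projectivization.mk ℂ z hz = q},
      (∏ i, α i q.1.rep) ≠ 0 := by
    rintro ⟨q, z, hz, hprod, hmk⟩
    obtain ⟨a, ha⟩ := Projectivization.exists_smul_eq_mk_rep ℂ z hz
    simp only [← hmk, ← ha, Units.smul_def]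
    rw [hps]
    exact mul_ne_zero (pow_ne_zero _ a.ne_zero) hprod
  have hα0rep : ∀ q : {q : Projectivization ℂ (Fin ℓ → ℂ) //
      ∃ z : Fin ℓ → ℂ, ∃ hz : z ≠ 0, (∏ i, α i z) ≠ 0 ∧ Projectivization.mk ℂ z hz = q},
      α i0 q.1.rep ≠ 0 :=
    fun q h => hrep q (Finset.prod_eq_zero (Finset.mem_univ i0) h)
  -- the section
  let g : {q : Projectivization ℂ (Fin ℓ → ℂ) //
      ∃ z : Fin ℓ → ℂ, ∃ hz : z ≠ 0, (∏ i, α i z) ≠ 0 ∧ Projectivization.mk ℂ z hz = q} →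
      {z : Fin ℓ → ℂ // (∏ i, α i z) ≠ 0} :=
    fun q => ⟨(α i0 q.1.rep)⁻¹ • q.1.rep, by
      rw [hps]
      exact mul_ne_zero (pow_ne_zero _ (inv_ne_zero (hα0rep q))) (hrep q)⟩
  have hgp : ∀ z : {z : Fin ℓ → ℂ // (∏ i, α i z) ≠ 0},
      (g (p z)).1 = (α i0 z.1)⁻¹ • z.1 := by
    intro z
    obtain ⟨a, ha⟩ := Projectivization.exists_smul_eq_mk_rep ℂ z.1 (hz0 z.1 z.2)
    show (α i0 ((Projectivization.mk ℂ z.1 (hz0 z.1 z.2)).rep))⁻¹ •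
      (Projectivization.mk ℂ z.1 (hz0 z.1 z.2)).rep = (α i0 z.1)⁻¹ • z.1
    rw [← ha, Units.smul_def, map_smul, smul_eq_mul, smul_smul]
    congr 1
    have hane : (a : ℂ) ≠ 0 := a.ne_zero
    have hc : α i0 z.1 ≠ 0 := hα0 z
    field_simp
  -- p is a quotient map
  have hj : Continuous (fun z : {z : Fin ℓ → ℂ // (∏ i, α i z) ≠ 0} =>
      (⟨z.1, hz0 z.1 z.2⟩ : {v : Fin ℓ → ℂ // v ≠ 0})) :=
    Continuous.subtype_mk continuous_subtype_val _
  have hpc : Continuous p :=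
    Continuous.subtype_mk (ArrAux.isQuotientMap_projMk.continuous.comp hj) _
  have hpsurj : Function.Surjective p := by
    rintro ⟨q, z, hz, hprod, hmk⟩
    exact ⟨⟨z, hprod⟩, Subtype.ext hmk⟩
  have hpopen : IsOpenMap p := by
    intro U hU
    have hUopen : IsOpen ((fun z : {z : Fin ℓ → ℂ // (∏ i, α i z) ≠ 0} =>
        (⟨z.1, hz0 z.1 z.2⟩ : {v : Fin ℓ → ℂ // v ≠ 0})) '' U) := by
      obtain ⟨W, hW, rfl⟩ := isOpen_induced_iff.1 hU
      have himg : (fun z : {z : Fin ℓ → ℂ // (∏ i, α i z) ≠ 0} =>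
          (⟨z.1, hz0 z.1 z.2⟩ : {v : Fin ℓ → ℂ // v ≠ 0})) '' (Subtype.val ⁻¹' W)
          = Subtype.val ⁻¹' (W ∩ {z : Fin ℓ → ℂ | (∏ i, α i z) ≠ 0}) := by
        ext v
        simp only [Set.mem_image, Set.mem_preimage, Set.mem_inter_iff, Set.mem_setOf_eq]
        constructor
        · rintro ⟨z, hzW, rfl⟩
          exact ⟨hzW, z.2⟩
        · rintro ⟨hvW, hvprod⟩
          exact ⟨⟨v.1, hvprod⟩, hvW, rfl⟩
      rw [himg]
      exact ((hW.inter (isOpen_compl_singleton.preimage hcprod)).preimage continuous_subtype_val)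
    have himg2 : p '' U = Subtype.val ⁻¹'
        ((fun v : {v : Fin ℓ → ℂ // v ≠ 0} => Projectivization.mk ℂ v.1 v.2) ''
          ((fun z : {z : Fin ℓ → ℂ // (∏ i, α i z) ≠ 0} =>
            (⟨z.1, hz0 z.1 z.2⟩ : {v : Fin ℓ → ℂ // v ≠ 0})) '' U)) := by
      ext q
      simp only [Set.mem_image, Set.mem_preimage]
      constructor
      · rintro ⟨z, hzU, rfl⟩
        exact ⟨⟨z.1, hz0 z.1 z.2⟩, ⟨z, hzU, rfl⟩, rfl⟩
      · rintro ⟨v, ⟨z, hzU, rfl⟩, hq⟩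
        exact ⟨z, hzU, Subtype.ext hq⟩
    rw [himg2]
    exact (ArrAux.isOpenMap_projMk _ hUopen).preimage continuous_subtype_val
  have hquot : IsQuotientMap p := hpopen.isQuotientMap hpc hpsurj
  -- continuity of g
  have hg : Continuous g := by
    rw [hquot.continuous_iff]
    apply continuous_induced_rng.2
    have he : (Subtype.val ∘ (g ∘ p)) =
        fun z : {z : Fin ℓ → ℂ // (∏ i, α i z) ≠ 0} => (α i0 z.1)⁻¹ • z.1 :=
      funext fun z => hgp z
    rw [he]
    exact Continuous.smul (((hcα i0).comp continuous_subtype_val).inv₀ fun z => hα0 z)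
      continuous_subtype_val
  have hgval1 : ∀ q, α i0 (g q).1 = 1 := by
    intro q
    show α i0 ((α i0 q.1.rep)⁻¹ • q.1.rep) = 1
    rw [map_smul, smul_eq_mul, inv_mul_cancel₀ (hα0rep q)]
  -- the homeomorphism
  let e : {z : Fin ℓ → ℂ // (∏ i, α i z) ≠ 0} ≃ₜ
      ({q : Projectivization ℂ (Fin ℓ → ℂ) //
          ∃ z : Fin ℓ → ℂ, ∃ hz : z ≠ 0, (∏ i, α i z) ≠ 0 ∧ Projectivization.mk ℂ z hz = q}
        × {c : ℂ // c ≠ 0}) :=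
    { toFun := fun z => (p z, ⟨α i0 z.1, hα0 z⟩)
      invFun := fun x => ⟨x.2.1 • (g x.1).1, by
        rw [hps]
        exact mul_ne_zero (pow_ne_zero _ x.2.2) (g x.1).2⟩
      left_inv := by
        intro z
        apply Subtype.ext
        show α i0 z.1 • (g (p z)).1 = z.1
        rw [hgp z]
        exact smul_inv_smul₀ (hα0 z) z.1
      right_inv := by
        rintro ⟨q, c⟩
        have h2 : α i0 (c.1 • (g q).1) = c.1 := by
          rw [map_smul, smul_eq_mul, hgval1, mul_one]
        refine Prod.ext (Subtype.ext ?_) (Subtype.ext h2)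
        show Projectivization.mk ℂ (c.1 • (g q).1) _ = q.1
        have hmk1 : Projectivization.mk ℂ (c.1 • (g q).1)
            (hz0 _ (by rw [hps]; exact mul_ne_zero (pow_ne_zero _ c.2) (g q).2)) =
            Projectivization.mk ℂ q.1.rep q.1.rep_nonzero := by
          rw [Projectivization.mk_eq_mk_iff']
          refine ⟨c.1 * (α i0 q.1.rep)⁻¹, ?_⟩
          rw [mul_smul]
        exact hmk1.trans (Projectivization.mk_rep q.1)
      continuous_toFun := Continuous.prodMk hpc
        (Continuous.subtype_mk ((hcα i0).comp continuous_subtype_val) _)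
      continuous_invFun := by
        apply Continuous.subtype_mk
        exact Continuous.smul (continuous_subtype_val.comp continuous_snd)
          (continuous_subtype_val.comp (hg.comp continuous_fst)) }
  exact ⟨e.toHomotopyEquiv.trans ((ContinuousMap.HomotopyEquiv.refl _).prodCongr
    ArrAux.puncturedHomotopyEquivCircle)⟩
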